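/- Concavity of the Benders subproblem value function: for any ȳ¹, v̄¹, ȳ², v̄² : I → ℝ with all entries nonnegative and any θ ∈ [0, 1], one has φ'(θ·ȳ¹ + (1 − θ)·ȳ², θ·v̄¹ + (1 − θ)·v̄²) ≥ θ·φ'(ȳ¹, v̄¹) + (1 − θ)·φ'(ȳ², v̄²). -/
import Mathlib


/-- A tuple `(x, ρ, τ, π, σ)` is subproblem-feasible for master solution
`(ȳ, v̄)` of the Benders decomposition. -/
def SubFeasible {I J : Type*} [Fintype I] [Fintype J]
    (d dhat : J → ℝ) (Γ : ℕ) (cov : J → Finset I) (ybar vbar : I → ℝ)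
    (x : I → J → ℝ) (ρ : I → ℝ) (τ : ℝ) (π : J → ℝ) (σ : I → J → ℝ) : Prop :=
  (∀ i j, 0 ≤ x i j) ∧ (∀ i, 0 ≤ ρ i) ∧ 0 ≤ τ ∧ (∀ j, 0 ≤ π j) ∧
  (∀ i j, 0 ≤ σ i j) ∧
  (∀ i j, i ∉ cov j → x i j = 0) ∧
  (∀ i, ∑ j, d j * x i j + (Γ : ℝ) * ρ i + ∑ j, σ i j ≤ vbar i) ∧
  (∀ j, ∑ i, dhat j * x i j ≤ τ + π j) ∧
  (∀ i j, dhat j * x i j ≤ σ i j + ρ i) ∧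
  (∀ j, ∑ i, x i j ≤ 1) ∧
  (∀ j, ∀ i ∈ cov j, x i j ≤ ybar i)

/-- The coverage `Z(x, τ, π)` achieved by a subproblem tuple. -/
def coverage {I J : Type*} [Fintype I] [Fintype J]
    (d : J → ℝ) (Γ : ℕ) (x : I → J → ℝ) (τ : ℝ) (π : J → ℝ) : ℝ :=
  ∑ i, ∑ j, d j * x i j - (Γ : ℝ) * τ - ∑ j, π j

/-- The Benders subproblem value `φ'(ȳ, v̄)`: the supremum of the coverage over
all subproblem-feasible tuples for `(ȳ, v̄)`. -/
noncomputable def phi' {I J : Type*} [Fintype I] [Fintype J]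
    (d dhat : J → ℝ) (Γ : ℕ) (cov : J → Finset I) (ybar vbar : I → ℝ) : ℝ :=
  sSup {t : ℝ | ∃ x ρ τ π σ,
    SubFeasible d dhat Γ cov ybar vbar x ρ τ π σ ∧ t = coverage d Γ x τ π}

-- zero tuple feasible
lemma feas_zero {I J : Type*} [Fintype I] [Fintype J]
    (d dhat : J → ℝ) (Γ : ℕ) (cov : J → Finset I) (ybar vbar : I → ℝ)
    (hy : ∀ i, 0 ≤ ybar i) (hv : ∀ i, 0 ≤ vbar i) :
    SubFeasible d dhat Γ cov ybar vbar (fun _ _ => 0) (fun _ => 0) 0 (fun _ => 0)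
      (fun _ _ => 0) := by
  refine ⟨fun _ _ => le_refl _, fun _ => le_refl _, le_refl _, fun _ => le_refl _,
    fun _ _ => le_refl _, fun _ _ _ => rfl, fun i => ?_, fun j => ?_, fun i j => ?_,
    fun j => ?_, fun j i _ => hy i⟩ <;> simp [hv]

lemma cov_bound {I J : Type*} [Fintype I] [Fintype J]
    (d dhat : J → ℝ) (hd : ∀ j, 0 ≤ d j) (Γ : ℕ) (cov : J → Finset I) (ybar vbar : I → ℝ)
    {x ρ τ π σ} (h : SubFeasible d dhat Γ cov ybar vbar x ρ τ π σ) :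
    coverage d Γ x τ π ≤ ∑ j, d j := by
  obtain ⟨hx, hρ, hτ, hπ, hσ, -, -, -, -, hsum, -⟩ := h
  have h1 : ∑ i, ∑ j, d j * x i j ≤ ∑ j, d j := by
    rw [Finset.sum_comm]
    refine Finset.sum_le_sum fun j _ => ?_
    rw [← Finset.mul_sum]
    calc d j * ∑ i, x i j ≤ d j * 1 := by
          apply mul_le_mul_of_nonneg_left (hsum j) (hd j)
      _ = d j := mul_one _
  have h2 : 0 ≤ (Γ : ℝ) * τ := mul_nonneg (Nat.cast_nonneg _) hτ
  have h3 : 0 ≤ ∑ j, π j := Finset.sum_nonneg fun j _ => hπ j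
  unfold coverage; linarith

lemma set_nonempty_bdd {I J : Type*} [Fintype I] [Fintype J]
    (d dhat : J → ℝ) (hd : ∀ j, 0 ≤ d j) (Γ : ℕ) (cov : J → Finset I) (ybar vbar : I → ℝ)
    (hy : ∀ i, 0 ≤ ybar i) (hv : ∀ i, 0 ≤ vbar i) :
    ({t : ℝ | ∃ x ρ τ π σ,
      SubFeasible d dhat Γ cov ybar vbar x ρ τ π σ ∧ t = coverage d Γ x τ π}).Nonempty ∧
    BddAbove {t : ℝ | ∃ x ρ τ π σ,
      SubFeasible d dhat Γ cov ybar vbar x ρ τ π σ ∧ t = coverage d Γ x τ π} := by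
  constructor
  · exact ⟨_, _, _, _, _, _, feas_zero d dhat Γ cov ybar vbar hy hv, rfl⟩
  · refine ⟨∑ j, d j, fun t ht => ?_⟩
    obtain ⟨x, ρ, τ, π, σ, hf, rfl⟩ := ht
    exact cov_bound d dhat hd Γ cov ybar vbar hf

lemma feas_combine {I J : Type*} [Fintype I] [Fintype J]
    (d dhat : J → ℝ) (hdhat : ∀ j, 0 ≤ dhat j) (Γ : ℕ) (cov : J → Finset I)
    (y₁ v₁ y₂ v₂ : I → ℝ) (θ : ℝ) (hθ₀ : 0 ≤ θ) (hθ₁ : θ ≤ 1)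
    {x₁ ρ₁ τ₁ π₁ σ₁ x₂ ρ₂ τ₂ π₂ σ₂}
    (h₁ : SubFeasible d dhat Γ cov y₁ v₁ x₁ ρ₁ τ₁ π₁ σ₁)
    (h₂ : SubFeasible d dhat Γ cov y₂ v₂ x₂ ρ₂ τ₂ π₂ σ₂) :
    SubFeasible d dhat Γ cov (fun i => θ * y₁ i + (1 - θ) * y₂ i)
      (fun i => θ * v₁ i + (1 - θ) * v₂ i)
      (fun i j => θ * x₁ i j + (1 - θ) * x₂ i j)
      (fun i => θ * ρ₁ i + (1 - θ) * ρ₂ i)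
      (θ * τ₁ + (1 - θ) * τ₂)
      (fun j => θ * π₁ j + (1 - θ) * π₂ j)
      (fun i j => θ * σ₁ i j + (1 - θ) * σ₂ i j) := by
  obtain ⟨hx1, hρ1, hτ1, hπ1, hσ1, hc1, hv1, hs1, hr1, h11, hy1⟩ := h₁
  obtain ⟨hx2, hρ2, hτ2, hπ2, hσ2, hc2, hv2, hs2, hr2, h12, hy2⟩ := h₂
  have hθ' : (0:ℝ) ≤ 1 - θ := by linarith
  refine ⟨?_, ?_, ?_, ?_, ?_, ?_, ?_, ?_, ?_, ?_, ?_⟩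
  · intro i j; have := hx1 i j; have := hx2 i j; positivity
  · intro i; have := hρ1 i; have := hρ2 i; positivity
  · have := hτ1; have := hτ2; positivity
  · intro j; have := hπ1 j; have := hπ2 j; positivity
  · intro i j; have := hσ1 i j; have := hσ2 i j; positivity
  · intro i j hij; dsimp only; rw [hc1 i j hij, hc2 i j hij]; ring
  · intro i
    have e1 : ∑ j, d j * (θ * x₁ i j + (1 - θ) * x₂ i j)
        = θ * ∑ j, d j * x₁ i j + (1 - θ) * ∑ j, d j * x₂ i j := by
      rw [Finset.mul_sum, Finset.mul_sum, ← Finset.sum_add_distrib]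
      exact Finset.sum_congr rfl fun j _ => by ring
    have e2 : ∑ j, (θ * σ₁ i j + (1 - θ) * σ₂ i j)
        = θ * ∑ j, σ₁ i j + (1 - θ) * ∑ j, σ₂ i j := by
      rw [Finset.mul_sum, Finset.mul_sum, ← Finset.sum_add_distrib]
    have := mul_le_mul_of_nonneg_left (hv1 i) hθ₀
    have := mul_le_mul_of_nonneg_left (hv2 i) hθ'
    dsimp only; rw [e1, e2]; nlinarith
  · intro j
    have e1 : ∑ i, dhat j * (θ * x₁ i j + (1 - θ) * x₂ i j)
        = θ * ∑ i, dhat j * x₁ i j + (1 - θ) * ∑ i, dhat j * x₂ i j := by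
      rw [Finset.mul_sum, Finset.mul_sum, ← Finset.sum_add_distrib]
      exact Finset.sum_congr rfl fun i _ => by ring
    have := mul_le_mul_of_nonneg_left (hs1 j) hθ₀
    have := mul_le_mul_of_nonneg_left (hs2 j) hθ'
    dsimp only; rw [e1]; nlinarith
  · intro i j
    have := mul_le_mul_of_nonneg_left (hr1 i j) hθ₀
    have := mul_le_mul_of_nonneg_left (hr2 i j) hθ'
    dsimp only; nlinarith
  · intro j
    have e1 : ∑ i, (θ * x₁ i j + (1 - θ) * x₂ i j)
        = θ * ∑ i, x₁ i j + (1 - θ) * ∑ i, x₂ i j := by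
      rw [Finset.mul_sum, Finset.mul_sum, ← Finset.sum_add_distrib]
    have := mul_le_mul_of_nonneg_left (h11 j) hθ₀
    have := mul_le_mul_of_nonneg_left (h12 j) hθ'
    dsimp only; rw [e1]; nlinarith
  · intro j i hij
    have := mul_le_mul_of_nonneg_left (hy1 j i hij) hθ₀
    have := mul_le_mul_of_nonneg_left (hy2 j i hij) hθ'
    dsimp only; nlinarith

lemma cov_combine {I J : Type*} [Fintype I] [Fintype J]
    (d : J → ℝ) (Γ : ℕ) (x₁ x₂ : I → J → ℝ) (τ₁ τ₂ : ℝ) (π₁ π₂ : J → ℝ) (θ : ℝ) :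
    coverage d Γ (fun i j => θ * x₁ i j + (1 - θ) * x₂ i j)
      (θ * τ₁ + (1 - θ) * τ₂) (fun j => θ * π₁ j + (1 - θ) * π₂ j)
    = θ * coverage d Γ x₁ τ₁ π₁ + (1 - θ) * coverage d Γ x₂ τ₂ π₂ := by
  unfold coverage
  have e1 : ∑ i, ∑ j, d j * (θ * x₁ i j + (1 - θ) * x₂ i j)
      = θ * ∑ i, ∑ j, d j * x₁ i j + (1 - θ) * ∑ i, ∑ j, d j * x₂ i j := by
    rw [Finset.mul_sum, Finset.mul_sum, ← Finset.sum_add_distrib]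
    refine Finset.sum_congr rfl fun i _ => ?_
    rw [Finset.mul_sum, Finset.mul_sum, ← Finset.sum_add_distrib]
    exact Finset.sum_congr rfl fun j _ => by ring
  have e2 : ∑ j, (θ * π₁ j + (1 - θ) * π₂ j)
      = θ * ∑ j, π₁ j + (1 - θ) * ∑ j, π₂ j := by
    rw [Finset.mul_sum, Finset.mul_sum, ← Finset.sum_add_distrib]
  rw [e1, e2]; ring

/-- Concavity of the Benders subproblem value function `φ'`. -/
theorem benders_subproblem_value_concave {I J : Type*}
    [Fintype I] [Nonempty I] [Fintype J] [Nonempty J]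
    (d dhat : J → ℝ) (hd : ∀ j, 0 ≤ d j) (hdhat : ∀ j, 0 ≤ dhat j)
    (Γ : ℕ) (cov : J → Finset I)
    (ybar₁ vbar₁ ybar₂ vbar₂ : I → ℝ)
    (hy₁ : ∀ i, 0 ≤ ybar₁ i) (hv₁ : ∀ i, 0 ≤ vbar₁ i)
    (hy₂ : ∀ i, 0 ≤ ybar₂ i) (hv₂ : ∀ i, 0 ≤ vbar₂ i)
    (θ : ℝ) (hθ₀ : 0 ≤ θ) (hθ₁ : θ ≤ 1) :
    θ * phi' d dhat Γ cov ybar₁ vbar₁ + (1 - θ) * phi' d dhat Γ cov ybar₂ vbar₂ ≤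
      phi' d dhat Γ cov (fun i => θ * ybar₁ i + (1 - θ) * ybar₂ i)
        (fun i => θ * vbar₁ i + (1 - θ) * vbar₂ i) := by
  have hθ' : (0:ℝ) ≤ 1 - θ := by linarith
  have h1 := set_nonempty_bdd d dhat hd Γ cov ybar₁ vbar₁ hy₁ hv₁
  have h2 := set_nonempty_bdd d dhat hd Γ cov ybar₂ vbar₂ hy₂ hv₂
  have h3 := set_nonempty_bdd d dhat hd Γ cov
      (fun i => θ * ybar₁ i + (1 - θ) * ybar₂ i)
      (fun i => θ * vbar₁ i + (1 - θ) * vbar₂ i)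
      (fun i => by have := hy₁ i; have := hy₂ i; positivity)
      (fun i => by have := hv₁ i; have := hv₂ i; positivity)
  refine le_of_forall_pos_le_add fun ε hε => ?_
  obtain ⟨s, hs, hs'⟩ := exists_lt_of_lt_csSup h1.1
    (show phi' d dhat Γ cov ybar₁ vbar₁ - ε/2 < _ from by unfold phi'; linarith)
  obtain ⟨t, ht, ht'⟩ := exists_lt_of_lt_csSup h2.1
    (show phi' d dhat Γ cov ybar₂ vbar₂ - ε/2 < _ from by unfold phi'; linarith)
  obtain ⟨x₁, ρ₁, τ₁, π₁, σ₁, hf₁, rfl⟩ := hs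
  obtain ⟨x₂, ρ₂, τ₂, π₂, σ₂, hf₂, rfl⟩ := ht
  have hmem : θ * coverage d Γ x₁ τ₁ π₁ + (1 - θ) * coverage d Γ x₂ τ₂ π₂ ≤
      phi' d dhat Γ cov (fun i => θ * ybar₁ i + (1 - θ) * ybar₂ i)
        (fun i => θ * vbar₁ i + (1 - θ) * vbar₂ i) := by
    rw [← cov_combine]
    exact le_csSup h3.2 ⟨_, _, _, _, _,
      feas_combine d dhat hdhat Γ cov _ _ _ _ θ hθ₀ hθ₁ hf₁ hf₂, rfl⟩
  have a1 : θ * phi' d dhat Γ cov ybar₁ vbar₁ ≤ θ * (coverage d Γ x₁ τ₁ π₁ + ε/2) :=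
    mul_le_mul_of_nonneg_left (by linarith) hθ₀
  have a2 : (1 - θ) * phi' d dhat Γ cov ybar₂ vbar₂ ≤
      (1 - θ) * (coverage d Γ x₂ τ₂ π₂ + ε/2) :=
    mul_le_mul_of_nonneg_left (by linarith) hθ'
  nlinarith
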